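/- Let P and Q be two probability distributions on a finite set M with total variation distance at most δ ∈ (0,1). Then the absolute difference of their Shannon entropies satisfies |H(P) − H(Q)| ≤ 2δ·log(|M|/δ). -/

import Mathlib

open scoped BigOperators

/-- Shannon entropy of a pmf on a finite set (natural log). -/
noncomputable def shannonEntropy {M : Type*} [Fintype M] (p : M → ℝ) : ℝ :=
  -∑ y, p y * Real.log (p y)

/-- Total variation distance between two pmfs on a finite set. -/
noncomputable def tvDist {M : Type*} [Fintype M] (p q : M → ℝ) : ℝ :=
  (∑ y, |p y - q y|) / 2

/-- `p` is a probability mass function. -/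
def IsPMF {M : Type*} [Fintype M] (p : M → ℝ) : Prop :=
  (∀ y, 0 ≤ p y) ∧ ∑ y, p y = 1

section AuxEntropy
open Real

lemma log_ge_one_sub_inv {x : ℝ} (hx : 0 < x) : 1 - 1/x ≤ Real.log x := by
  have h := Real.log_le_sub_one_of_pos (show (0:ℝ) < 1/x by positivity)
  rw [Real.log_div one_ne_zero hx.ne'] at h
  simp at h ⊢
  linarith

/-- tangent line of x log x at c -/
lemma nml_tangent {x c : ℝ} (hx : 0 ≤ x) (hc : 0 < c) :
    Real.negMulLog x ≤ Real.negMulLog c - (Real.log c + 1) * (x - c) := by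
  rcases eq_or_lt_of_le hx with h | h
  · simp [← h, Real.negMulLog]; nlinarith
  · have key : Real.log (c / x) ≤ c / x - 1 := Real.log_le_sub_one_of_pos (by positivity)
    rw [Real.log_div hc.ne' h.ne'] at key
    have hx' : x * (Real.log c - Real.log x) ≤ x * (c/x - 1) :=
      mul_le_mul_of_nonneg_left key hx
    have hcx : x * (c/x) = c := by field_simp
    rw [mul_sub] at hx'
    simp only [Real.negMulLog, neg_mul]
    nlinarith [hx', hcx]

lemma nml_subadd {a b : ℝ} (ha : 0 ≤ a) (hb : 0 ≤ b) :
    Real.negMulLog (a + b) ≤ Real.negMulLog a + Real.negMulLog b := by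
  rcases eq_or_lt_of_le ha with h | h
  · simp [← h]
  rcases eq_or_lt_of_le hb with h' | h'
  · simp [← h']
  have hab : 0 < a + b := by linarith
  have h1 : a * Real.log a ≤ a * Real.log (a + b) :=
    mul_le_mul_of_nonneg_left (Real.log_le_log h (by linarith)) ha
  have h2 : b * Real.log b ≤ b * Real.log (a + b) :=
    mul_le_mul_of_nonneg_left (Real.log_le_log h' (by linarith)) hb
  simp only [Real.negMulLog, neg_mul]
  nlinarith

lemma nml_dec {y ε : ℝ} (hy : 0 ≤ y) (hε : 0 ≤ ε) (h1 : y + ε ≤ 1) :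
    Real.negMulLog y - Real.negMulLog (y + ε) ≤ ε := by
  rcases eq_or_lt_of_le hε with h | h
  · simp [← h]
  have hyε : 0 < y + ε := by linarith
  have h2 : ε * Real.log (y + ε) ≤ 0 :=
    mul_nonpos_of_nonneg_of_nonpos hε (Real.log_nonpos (by linarith) h1)
  rcases eq_or_lt_of_le hy with h0 | h0
  · have h2' : ε * Real.log ε ≤ 0 := by rw [← h0, zero_add] at h2; exact h2
    simp only [Real.negMulLog, neg_mul, ← h0, zero_add]
    nlinarith
  · have key : Real.log ((y+ε)/y) ≤ (y+ε)/y - 1 := Real.log_le_sub_one_of_pos (by positivity)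
    rw [Real.log_div hyε.ne' h0.ne'] at key
    have h3 : y * (Real.log (y+ε) - Real.log y) ≤ y * ((y+ε)/y - 1) :=
      mul_le_mul_of_nonneg_left key hy
    have hyy : y * ((y+ε)/y) = y + ε := by field_simp
    rw [mul_sub] at h3
    simp only [Real.negMulLog, neg_mul]
    nlinarith [h3, hyy, h2]

lemma nml_le_inv_e {x : ℝ} (hx : 0 ≤ x) : Real.negMulLog x ≤ (Real.exp 1)⁻¹ := by
  rcases eq_or_lt_of_le hx with h | h
  · simp [← h]; positivity
  · have he : (0:ℝ) < Real.exp 1 := Real.exp_pos 1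
    have key := log_ge_one_sub_inv (show 0 < Real.exp 1 * x by positivity)
    rw [Real.log_mul he.ne' h.ne', Real.log_exp] at key
    have hx' : x * (1 - 1/(Real.exp 1 * x)) ≤ x * (1 + Real.log x) :=
      mul_le_mul_of_nonneg_left (by linarith) hx
    have : x * (1/(Real.exp 1 * x)) = (Real.exp 1)⁻¹ := by
      field_simp
    simp only [Real.negMulLog, neg_mul]
    nlinarith [this, hx']

lemma nml_le_add_log_two {ε : ℝ} (hε : 0 ≤ ε) (hε1 : ε ≤ 1) :
    ε ≤ Real.negMulLog ε + ε * Real.log 2 ∨ (Real.exp 1)⁻¹ ≤ ε * Real.log 2 := by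
  rcases le_or_gt ε (2 * (Real.exp 1)⁻¹) with h | h
  · left
    rcases eq_or_lt_of_le hε with h0 | h0
    · simp [← h0]
    have hlog : Real.log ε ≤ Real.log 2 - 1 := by
      have := Real.log_le_log h0 h
      rwa [Real.log_mul two_ne_zero (by positivity), Real.log_inv, Real.log_exp] at this
    have := mul_le_mul_of_nonneg_left hlog hε
    simp only [Real.negMulLog, neg_mul]
    nlinarith
  · right
    have hl2 : (0.6931471803 : ℝ) < Real.log 2 := Real.log_two_gt_d9
    have he : (0:ℝ) < Real.exp 1 := Real.exp_pos 1
    have h2 : 2 * (Real.exp 1)⁻¹ * Real.log 2 ≤ ε * Real.log 2 :=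
      mul_le_mul_of_nonneg_right h.le (by linarith)
    have : (Real.exp 1)⁻¹ ≤ 2 * (Real.exp 1)⁻¹ * Real.log 2 := by
      rw [show 2 * (Real.exp 1)⁻¹ * Real.log 2 = (Real.exp 1)⁻¹ * (2 * Real.log 2) by ring]
      nlinarith [inv_pos.mpr he]
    linarith

/-- key per-term bound -/
lemma nml_key {x y : ℝ} (hx0 : 0 ≤ x) (hx1 : x ≤ 1) (hy0 : 0 ≤ y) (hy1 : y ≤ 1) :
    |Real.negMulLog x - Real.negMulLog y| ≤
      Real.negMulLog |x - y| + |x - y| * Real.log 2 := by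
  -- WLOG via an auxiliary one-sided claim
  have main : ∀ a b : ℝ, 0 ≤ a → a ≤ b → b ≤ 1 →
      |Real.negMulLog b - Real.negMulLog a| ≤
        Real.negMulLog (b - a) + (b - a) * Real.log 2 := by
    intro a b ha hab hb1
    have hε : 0 ≤ b - a := by linarith
    have hε1 : b - a ≤ 1 := by linarith
    rw [abs_sub_le_iff]
    constructor
    · -- nml b - nml a ≤ nml (b-a) ≤ RHS
      have := nml_subadd ha hε
      have h2 : 0 ≤ (b - a) * Real.log 2 := by
        have := Real.log_nonneg (by norm_num : (1:ℝ) ≤ 2); positivity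
      have hb : a + (b - a) = b := by ring
      rw [hb] at this
      linarith
    · rcases nml_le_add_log_two hε hε1 with h | h
      · have := nml_dec ha hε (by linarith)
        have hb : a + (b - a) = b := by ring
        rw [hb] at this
        linarith
      · have h1 : Real.negMulLog a ≤ (Real.exp 1)⁻¹ := nml_le_inv_e ha
        have h2 : 0 ≤ Real.negMulLog b := Real.negMulLog_nonneg (by linarith) hb1
        have h3 : 0 ≤ Real.negMulLog (b - a) := Real.negMulLog_nonneg hε hε1
        linarith
  rcases le_total y x with h | h
  · have := main y x hy0 h hx1
    rwa [abs_of_nonneg (by linarith : (0:ℝ) ≤ x - y)]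
  · have := main x y hx0 h hy1
    rw [abs_sub_comm (x:ℝ) y, abs_of_nonneg (by linarith : (0:ℝ) ≤ y - x), abs_sub_comm]
    exact this

/-- Gibbs-type bound: sum of negMulLog over a finite type. -/
lemma sum_nml_le {M : Type*} [Fintype M] [Nonempty M] (ε : M → ℝ) (hε : ∀ y, 0 ≤ ε y)
    (hs : 0 < ∑ y, ε y) :
    ∑ y, Real.negMulLog (ε y) ≤
      (∑ y, ε y) * Real.log ((Fintype.card M : ℝ) / (∑ y, ε y)) := by
  set s := ∑ y, ε y with hs_def
  set m : ℝ := (Fintype.card M : ℝ) with hm_def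
  have hm : 0 < m := by
    rw [hm_def]
    exact_mod_cast Fintype.card_pos
  have hc : 0 < s / m := by positivity
  have key : ∀ y, Real.negMulLog (ε y) ≤
      Real.negMulLog (s/m) - (Real.log (s/m) + 1) * (ε y - s/m) :=
    fun y => nml_tangent (hε y) hc
  calc ∑ y, Real.negMulLog (ε y)
      ≤ ∑ y, (Real.negMulLog (s/m) - (Real.log (s/m) + 1) * (ε y - s/m)) :=
        Finset.sum_le_sum fun y _ => key y
    _ = m * Real.negMulLog (s/m) - (Real.log (s/m) + 1) * (s - m * (s/m)) := by
        rw [Finset.sum_sub_distrib, ← Finset.mul_sum, Finset.sum_const, Finset.sum_sub_distrib,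
          Finset.sum_const]
        simp only [Finset.card_univ, nsmul_eq_mul, hs_def, hm_def]
    _ = s * Real.log (m / s) := by
        rw [mul_div_cancel₀ _ hm.ne', Real.negMulLog, Real.log_div hm.ne' hs.ne',
          Real.log_div hs.ne' hm.ne']
        field_simp
        ring

/-- monotonicity of t ↦ t log (c/t) -/
lemma mul_log_div_mono {s t c : ℝ} (hs : 0 ≤ s) (hst : s ≤ t) (ht : 0 < t)
    (hc : Real.exp 1 * t ≤ c) :
    s * Real.log (c / s) ≤ t * Real.log (c / t) := by
  have he : (0:ℝ) < Real.exp 1 := Real.exp_pos 1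
  have hc0 : 0 < c := lt_of_lt_of_le (by positivity) hc
  have hct : 1 ≤ Real.log (c / t) := by
    calc (1:ℝ) = Real.log (Real.exp 1) := (Real.log_exp 1).symm
    _ ≤ Real.log (c / t) := Real.log_le_log he ((le_div_iff₀ ht).mpr (by linarith))
  rcases eq_or_lt_of_le hs with h0 | h0
  · rw [← h0]; nlinarith
  · have hlog : Real.log (t / s) ≤ t / s - 1 := Real.log_le_sub_one_of_pos (by positivity)
    have hsplit : Real.log (c / s) = Real.log (c / t) + Real.log (t / s) := by
      rw [Real.log_div hc0.ne' h0.ne', Real.log_div hc0.ne' ht.ne',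
        Real.log_div ht.ne' h0.ne']
      ring
    have hts : s * (t / s) = t := by field_simp
    have h1 : s * Real.log (t / s) ≤ t - s := by nlinarith
    nlinarith

end AuxEntropy

/-- If two pmfs on a finite set `M` are within total variation distance `δ ∈ (0,1)`,
their Shannon entropies differ by at most `2δ·log(|M|/δ)`. -/
theorem entropy_diff_le_of_tv {M : Type*} [Fintype M] [Nonempty M]
    (p q : M → ℝ) (δ : ℝ) (hp : IsPMF p) (hq : IsPMF q)
    (hδ : δ ∈ Set.Ioo (0:ℝ) 1) (htv : tvDist p q ≤ δ) :
    |shannonEntropy p - shannonEntropy q| ≤ 2 * δ * Real.log ((Fintype.card M : ℝ) / δ) := by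
  classical
  obtain ⟨hp0, hp1⟩ := hp
  obtain ⟨hq0, hq1⟩ := hq
  obtain ⟨hδ0, hδ1⟩ := hδ
  have hple : ∀ y, p y ≤ 1 := fun y => by
    calc p y ≤ ∑ z, p z := Finset.single_le_sum (fun z _ => hp0 z) (Finset.mem_univ y)
    _ = 1 := hp1
  have hqle : ∀ y, q y ≤ 1 := fun y => by
    calc q y ≤ ∑ z, q z := Finset.single_le_sum (fun z _ => hq0 z) (Finset.mem_univ y)
    _ = 1 := hq1
  have hSE : ∀ r : M → ℝ, shannonEntropy r = ∑ y, Real.negMulLog (r y) := fun r => by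
    simp [shannonEntropy, Real.negMulLog, Finset.sum_neg_distrib]
  set s := ∑ y, |p y - q y| with hs_def
  have htv' : tvDist p q = s / 2 := rfl
  have hs2δ : s ≤ 2 * δ := by rw [htv'] at htv; linarith
  have hs0 : 0 ≤ s := Finset.sum_nonneg fun y _ => abs_nonneg _
  have hlogδ : Real.log δ ≤ 0 := Real.log_nonpos hδ0.le hδ1.le
  have hmR1 : (1:ℝ) ≤ (Fintype.card M : ℝ) := by exact_mod_cast Fintype.card_pos
  have hRHS0 : 0 ≤ 2 * δ * Real.log ((Fintype.card M : ℝ) / δ) := by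
    have h1 : (1:ℝ) ≤ (Fintype.card M : ℝ) / δ := (le_div_iff₀ hδ0).mpr (by linarith)
    have h2 := Real.log_nonneg h1
    have h3 : (0:ℝ) ≤ 2 * δ := by linarith
    exact mul_nonneg h3 h2
  have habs : |shannonEntropy p - shannonEntropy q| ≤
      ∑ y, (Real.negMulLog |p y - q y| + |p y - q y| * Real.log 2) := by
    rw [hSE p, hSE q, ← Finset.sum_sub_distrib]
    refine (Finset.abs_sum_le_sum_abs _ _).trans (Finset.sum_le_sum fun y _ => ?_)
    exact nml_key (hp0 y) (hple y) (hq0 y) (hqle y)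
  by_cases hs : s = 0
  · have hz : ∀ y ∈ Finset.univ, |p y - q y| = (0:ℝ) :=
      (Finset.sum_eq_zero_iff_of_nonneg (fun y _ => abs_nonneg _)).mp hs
    have h0 : |shannonEntropy p - shannonEntropy q| ≤ 0 := by
      refine habs.trans (le_of_eq (Finset.sum_eq_zero fun y hy => ?_))
      rw [hz y hy]; simp
    linarith
  have hspos : 0 < s := lt_of_le_of_ne hs0 (Ne.symm hs)
  have hsplit : (∑ y, (Real.negMulLog |p y - q y| + |p y - q y| * Real.log 2))
      = (∑ y, Real.negMulLog |p y - q y|) + s * Real.log 2 := by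
    rw [Finset.sum_add_distrib, hs_def, ← Finset.sum_mul]
  rcases le_or_gt 3 (Fintype.card M) with h3 | h3
  · -- general case, card ≥ 3
    set mR : ℝ := (Fintype.card M : ℝ) with hmR_def
    have hm3 : (3:ℝ) ≤ mR := by rw [hmR_def]; exact_mod_cast h3
    have hsum := sum_nml_le (fun y => |p y - q y|) (fun y => abs_nonneg _) hspos
    have hcomb : |shannonEntropy p - shannonEntropy q| ≤ s * Real.log (2 * mR / s) := by
      have hlogeq : Real.log (mR / s) + Real.log 2 = Real.log (2 * mR / s) := by
        rw [← Real.log_mul (by positivity) two_ne_zero]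
        ring_nf
      calc |shannonEntropy p - shannonEntropy q|
          ≤ (∑ y, Real.negMulLog |p y - q y|) + s * Real.log 2 := by
            rw [← hsplit]; exact habs
        _ ≤ s * Real.log (mR / s) + s * Real.log 2 := by
            exact add_le_add_left hsum _
        _ = s * (Real.log (mR / s) + Real.log 2) := by ring
        _ = s * Real.log (2 * mR / s) := by rw [hlogeq]
    have he : Real.exp 1 < 2.7182818286 := Real.exp_one_lt_d9
    have hmono : s * Real.log (2 * mR / s) ≤ (2 * δ) * Real.log (2 * mR / (2 * δ)) := by
      refine mul_log_div_mono hs0 hs2δ (by linarith) ?_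
      nlinarith [Real.exp_pos 1]
    have heq : (2 * mR) / (2 * δ) = mR / δ := by
      rw [mul_div_mul_left _ _ (two_ne_zero)]
    rw [heq] at hmono
    calc |shannonEntropy p - shannonEntropy q| ≤ s * Real.log (2 * mR / s) := hcomb
      _ ≤ 2 * δ * Real.log (mR / δ) := by linarith [hmono]
  · -- card ≤ 2
    have hc12 : Fintype.card M = 1 ∨ Fintype.card M = 2 := by
      have := Fintype.card_pos (α := M); omega
    rcases hc12 with h1 | h2
    · -- card = 1 : contradiction with s > 0
      exfalso
      obtain ⟨a, ha⟩ := Fintype.card_eq_one_iff.mp h1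
      have huniv : (Finset.univ : Finset M) = {a} := by
        ext y; simp [ha y]
      have hpa : p a = 1 := by rw [← hp1, huniv, Finset.sum_singleton]
      have hqa : q a = 1 := by rw [← hq1, huniv, Finset.sum_singleton]
      have : s = 0 := by rw [hs_def, huniv, Finset.sum_singleton, hpa, hqa]; simp
      exact hs this
    · -- card = 2
      obtain ⟨a, b, hab, huniv⟩ := Finset.card_eq_two.mp h2
      have hsum_pair : ∀ f : M → ℝ, ∑ y, f y = f a + f b := fun f => by
        rw [huniv, Finset.sum_pair hab]
      have hpab : p a + p b = 1 := by rw [← hsum_pair p]; exact hp1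
      have hqab : q a + q b = 1 := by rw [← hsum_pair q]; exact hq1
      set ε := |p a - q a| with hε_def
      have hεb : |p b - q b| = ε := by
        rw [hε_def, show p b - q b = -(p a - q a) by linarith, abs_neg]
      have hsε : s = 2 * ε := by
        rw [hs_def, hsum_pair (fun y => |p y - q y|)]
        rw [hεb, hε_def]; ring
      have hεδ : ε ≤ δ := by linarith [hs2δ, hsε]
      have hε0 : 0 < ε := by
        rcases (abs_nonneg (p a - q a)).lt_or_eq with h | h
        · exact h
        · exfalso; apply hs; rw [hsε, hε_def, ← h]; ring
      have hΔ : shannonEntropy p - shannonEntropy q =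
          (Real.negMulLog (p a) - Real.negMulLog (q a)) +
          (Real.negMulLog (p b) - Real.negMulLog (q b)) := by
        rw [hSE p, hSE q, hsum_pair (fun y => Real.negMulLog (p y)),
          hsum_pair (fun y => Real.negMulLog (q y))]
        ring
      have key2 : |shannonEntropy p - shannonEntropy q| ≤ Real.negMulLog ε + ε := by
        rw [hΔ, abs_le]
        rcases le_total (q a) (p a) with hc | hc
        · have hεeq : ε = p a - q a := abs_of_nonneg (by linarith)
          have h1 : q a + ε = p a := by rw [hεeq]; ring
          have h2 : p b + ε = q b := by rw [hεeq]; linarith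
          have d1 : Real.negMulLog (q a) - Real.negMulLog (q a + ε) ≤ ε :=
            nml_dec (hq0 a) hε0.le (by rw [h1]; exact hple a)
          have d2 : Real.negMulLog (p b + ε) ≤ Real.negMulLog (p b) + Real.negMulLog ε :=
            nml_subadd (hp0 b) hε0.le
          have d3 : Real.negMulLog (q a + ε) ≤ Real.negMulLog (q a) + Real.negMulLog ε :=
            nml_subadd (hq0 a) hε0.le
          have d4 : Real.negMulLog (p b) - Real.negMulLog (p b + ε) ≤ ε :=
            nml_dec (hp0 b) hε0.le (by rw [h2]; exact hqle b)
          rw [← h1, ← h2]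
          constructor <;> linarith
        · have hεeq : ε = q a - p a := by
            rw [hε_def, abs_sub_comm]; exact abs_of_nonneg (by linarith)
          have h1 : p a + ε = q a := by rw [hεeq]; ring
          have h2 : q b + ε = p b := by rw [hεeq]; linarith
          have d1 : Real.negMulLog (p a) - Real.negMulLog (p a + ε) ≤ ε :=
            nml_dec (hp0 a) hε0.le (by rw [h1]; exact hqle a)
          have d2 : Real.negMulLog (q b + ε) ≤ Real.negMulLog (q b) + Real.negMulLog ε :=
            nml_subadd (hq0 b) hε0.le
          have d3 : Real.negMulLog (p a + ε) ≤ Real.negMulLog (p a) + Real.negMulLog ε :=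
            nml_subadd (hp0 a) hε0.le
          have d4 : Real.negMulLog (q b) - Real.negMulLog (q b + ε) ≤ ε :=
            nml_dec (hq0 b) hε0.le (by rw [h2]; exact hple b)
          rw [← h1, ← h2]
          constructor <;> linarith
      have hcard2 : (Fintype.card M : ℝ) = 2 := by rw [h2]; norm_num
      rw [hcard2]
      have step1 : Real.negMulLog ε + ε ≤ δ * (1 - Real.log δ) := by
        have hlog : Real.log (δ / ε) ≤ δ / ε - 1 :=
          Real.log_le_sub_one_of_pos (by positivity)
        rw [Real.log_div hδ0.ne' hε0.ne'] at hlog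
        have hd : ε * (δ / ε) = δ := by field_simp
        have hmul : ε * (Real.log δ - Real.log ε) ≤ ε * (δ / ε - 1) :=
          mul_le_mul_of_nonneg_left hlog hε0.le
        have hkey : (δ - ε) * (-Real.log δ) ≥ 0 :=
          mul_nonneg (by linarith) (by linarith)
        simp only [Real.negMulLog, neg_mul]
        nlinarith [hmul, hd, hkey]
      have step2 : δ * (1 - Real.log δ) ≤ 2 * δ * (Real.log 2 - Real.log δ) := by
        have hl2 : (0.6931471803 : ℝ) < Real.log 2 := Real.log_two_gt_d9
        have hx : 0 ≤ δ * (2 * Real.log 2 - 1 - Real.log δ) :=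
          mul_nonneg hδ0.le (by linarith)
        linarith [hx]
      have hlog2δ : Real.log (2 / δ) = Real.log 2 - Real.log δ :=
        Real.log_div two_ne_zero hδ0.ne'
      rw [hlog2δ]
      linarith [key2, step1, step2]
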